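/- Let k ≥ 2 be an integer and let F = (V,E) be a finite forest with |V| ≥ k. Then F admits a generalized k-community structure. -/

import Mathlib

/-- The set of neighbours of `v` lying in `C`. -/
def nbrsIn {V : Type*} [DecidableEq V] (G : SimpleGraph V) [DecidableRel G.Adj]
    (C : Finset V) (v : V) : Finset V :=
  C.filter (fun w => G.Adj v w)

open Finset SimpleGraph

set_option linter.unusedSectionVars false

section Helpers

variable {V : Type*} [Fintype V] [DecidableEq V] (G : SimpleGraph V) [DecidableRel G.Adj]

/-- Number of ordered adjacent pairs between `X` and `Y`. -/
def eCnt (X Y : Finset V) : ℕ := ∑ x ∈ X, ∑ y ∈ Y, if G.Adj x y then 1 else 0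

lemma eCnt_comm (X Y : Finset V) : eCnt G X Y = eCnt G Y X := by
  rw [eCnt, Finset.sum_comm]
  exact Finset.sum_congr rfl fun y _ => Finset.sum_congr rfl fun x _ => by
    simp only [G.adj_comm]

lemma eCnt_union_left {X X' : Finset V} (h : Disjoint X X') (Y : Finset V) :
    eCnt G (X ∪ X') Y = eCnt G X Y + eCnt G X' Y := Finset.sum_union h

lemma eCnt_union_right (X : Finset V) {Y Y' : Finset V} (h : Disjoint Y Y') :
    eCnt G X (Y ∪ Y') = eCnt G X Y + eCnt G X Y' := by
  rw [eCnt_comm, eCnt_union_left G h X, eCnt_comm G Y X, eCnt_comm G Y' X]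

lemma nbrsIn_card (C : Finset V) (v : V) : (nbrsIn G C v).card = eCnt G {v} C := by
  rw [eCnt, Finset.sum_singleton, nbrsIn, Finset.card_filter]

lemma eCnt_mono_left {X X' : Finset V} (h : X ⊆ X') (Y : Finset V) :
    eCnt G X Y ≤ eCnt G X' Y :=
  Finset.sum_le_sum_of_subset h

lemma nbrsIn_erase (C : Finset V) (v : V) :
    nbrsIn G (C.erase v) v = nbrsIn G C v := by
  ext y
  simp only [nbrsIn, mem_filter, mem_erase]
  constructor
  · rintro ⟨⟨_, hy⟩, ha⟩; exact ⟨hy, ha⟩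
  · rintro ⟨hy, ha⟩; exact ⟨⟨(G.ne_of_adj ha).symm, hy⟩, ha⟩

lemma eCnt_singleton_self (v : V) : eCnt G {v} {v} = 0 := by
  rw [eCnt, Finset.sum_singleton, Finset.sum_singleton, if_neg (G.irrefl)]

lemma eCnt_erase (C : Finset V) (v : V) (hv : v ∈ C) :
    eCnt G C C = eCnt G (C.erase v) (C.erase v) + 2 * (nbrsIn G C v).card := by
  have hC : C = {v} ∪ C.erase v := by rw [← Finset.insert_eq, Finset.insert_erase hv]
  have hd : Disjoint ({v} : Finset V) (C.erase v) := by simp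
  have h1 : eCnt G C C = eCnt G {v} {v} + eCnt G {v} (C.erase v) + (eCnt G (C.erase v) {v}
      + eCnt G (C.erase v) (C.erase v)) := by
    conv_lhs => rw [hC]
    rw [eCnt_union_left G hd, eCnt_union_right G _ hd, eCnt_union_right G _ hd]
  rw [h1, eCnt_singleton_self, eCnt_comm G (C.erase v) {v}, ← nbrsIn_card, nbrsIn_erase]
  ring

lemma eCnt_insert (C : Finset V) (v : V) (hv : v ∉ C) :
    eCnt G (insert v C) (insert v C) = eCnt G C C + 2 * (nbrsIn G C v).card := by
  have h := eCnt_erase G (insert v C) v (mem_insert_self v C)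
  rw [Finset.erase_insert hv] at h
  have h2 : nbrsIn G (insert v C) v = nbrsIn G C v := by
    simp only [nbrsIn, Finset.filter_insert, SimpleGraph.irrefl, if_false]
  rw [h2] at h
  exact h

/-- Reachability within a vertex set `A`. -/
def reachIn (A : Finset V) (x y : V) : Prop :=
  ∃ w : G.Walk x y, ∀ z ∈ w.support, z ∈ A

lemma reachIn_refl {A : Finset V} {x : V} (hx : x ∈ A) : reachIn G A x x :=
  ⟨SimpleGraph.Walk.nil, by simpa using hx⟩

lemma reachIn_symm {A : Finset V} {x y : V} (h : reachIn G A x y) : reachIn G A y x := by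
  obtain ⟨w, hw⟩ := h
  exact ⟨w.reverse, by intro z hz; rw [SimpleGraph.Walk.support_reverse] at hz
                       exact hw z (List.mem_reverse.mp hz)⟩

lemma reachIn_trans {A : Finset V} {x y z : V} (h : reachIn G A x y) (h' : reachIn G A y z) :
    reachIn G A x z := by
  obtain ⟨w, hw⟩ := h
  obtain ⟨w', hw'⟩ := h'
  refine ⟨w.append w', fun u hu => ?_⟩
  rcases (SimpleGraph.Walk.mem_support_append_iff w w').mp hu with h | h
  · exact hw u h
  · exact hw' u h

lemma reachIn_step {A : Finset V} {x y z : V} (h : reachIn G A x y) (hyz : G.Adj y z)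
    (hz : z ∈ A) : reachIn G A x z := by
  obtain ⟨w, hw⟩ := h
  refine ⟨w.append (SimpleGraph.Walk.cons hyz SimpleGraph.Walk.nil), fun u hu => ?_⟩
  rcases (SimpleGraph.Walk.mem_support_append_iff _ _).mp hu with h | h
  · exact hw u h
  · simp only [SimpleGraph.Walk.support_cons, SimpleGraph.Walk.support_nil, List.mem_cons,
      List.not_mem_nil, or_false, List.mem_singleton] at h
    rcases h with rfl | rfl
    · exact hw u w.end_mem_support
    · exact hz

lemma reachIn_mem_left {A : Finset V} {x y : V} (h : reachIn G A x y) : x ∈ A := by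
  obtain ⟨w, hw⟩ := h
  exact hw x w.start_mem_support



lemma reach_nbr_eq (hforest : G.IsAcyclic) {A : Finset V} {v : V} (hvA : v ∉ A)
    {x x' : V} (hx : G.Adj v x) (hx' : G.Adj v x') (h : reachIn G A x x') : x = x' := by
  by_contra hne
  obtain ⟨w, hw⟩ := h
  have hvsup : v ∉ w.support := fun hm => hvA (hw v hm)
  have hxv : x ≠ v := fun h => (G.ne_of_adj hx) h.symm
  have hx'v : x' ≠ v := fun h => (G.ne_of_adj hx') h.symm
  have hp₂ : (SimpleGraph.Walk.cons hx.symm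
      (SimpleGraph.Walk.cons hx' SimpleGraph.Walk.nil) : G.Walk x x').IsPath := by
    rw [SimpleGraph.Walk.isPath_def]
    simp only [SimpleGraph.Walk.support_cons, SimpleGraph.Walk.support_nil]
    simp [List.nodup_cons, hxv, hne, hx'v.symm, G.ne_of_adj hx']
  have huniq := (SimpleGraph.isAcyclic_iff_path_unique.mp hforest) w.toPath ⟨_, hp₂⟩
  have hv1 : v ∈ (w.toPath : G.Walk x x').support := by
    rw [huniq]
    simp [SimpleGraph.Walk.support_cons]
  exact hvsup (SimpleGraph.Walk.support_toPath_subset w hv1)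

/-- Averaging: one can pick a subset of size `m` carrying at most its proportional share. -/
lemma exists_small_subset (N : Finset V) (g : V → ℕ) (m : ℕ) (hm : m ≤ N.card) :
    ∃ E ⊆ N, E.card = m ∧ N.card * ∑ x ∈ E, g x ≤ m * ∑ x ∈ N, g x := by
  classical
  obtain ⟨E, hEmem, hEmin⟩ := Finset.exists_min_image (N.powersetCard m)
    (fun E => ∑ x ∈ E, g x) (Finset.powersetCard_nonempty.mpr hm)
  obtain ⟨hEN, hEcard⟩ := Finset.mem_powersetCard.mp hEmem
  refine ⟨E, hEN, hEcard, ?_⟩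
  have key : ∀ y ∈ E, ∀ x ∈ N, x ∉ E → g y ≤ g x := by
    intro y hy x hxN hxE
    have hyx : x ≠ y := fun h => hxE (h ▸ hy)
    have hE' : insert x (E.erase y) ∈ N.powersetCard m := by
      rw [Finset.mem_powersetCard]
      constructor
      · intro z hz
        rcases Finset.mem_insert.mp hz with rfl | hz
        · exact hxN
        · exact hEN (Finset.erase_subset _ _ hz)
      · rw [Finset.card_insert_of_notMem (fun h => hxE (Finset.erase_subset _ _ h)),
          Finset.card_erase_of_mem hy]
        have : 1 ≤ E.card := Finset.card_pos.mpr ⟨y, hy⟩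
        omega
    have h1 := hEmin _ hE'
    rw [Finset.sum_insert (fun h => hxE (Finset.erase_subset _ _ h))] at h1
    have h2 : ∑ z ∈ E.erase y, g z + g y = ∑ z ∈ E, g z := Finset.sum_erase_add E g hy
    omega
  have h1 : ∀ x ∈ N \ E, ∑ y ∈ E, g y ≤ m * g x := by
    intro x hx
    rw [Finset.mem_sdiff] at hx
    calc ∑ y ∈ E, g y ≤ ∑ _y ∈ E, g x :=
          Finset.sum_le_sum (fun y hy => key y hy x hx.1 hx.2)
    _ = m * g x := by rw [Finset.sum_const, hEcard, smul_eq_mul]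
  have h2 : (N.card - m) * ∑ y ∈ E, g y ≤ m * ∑ x ∈ N \ E, g x := by
    calc (N.card - m) * ∑ y ∈ E, g y = ∑ _x ∈ N \ E, ∑ y ∈ E, g y := by
          rw [Finset.sum_const, Finset.card_sdiff_of_subset hEN, hEcard, smul_eq_mul]
    _ ≤ ∑ x ∈ N \ E, m * g x := Finset.sum_le_sum h1
    _ = m * ∑ x ∈ N \ E, g x := by rw [Finset.mul_sum]
  have h3 : ∑ x ∈ N \ E, g x + ∑ x ∈ E, g x = ∑ x ∈ N, g x := Finset.sum_sdiff hEN
  have h4 : N.card * ∑ x ∈ E, g x = m * ∑ x ∈ E, g x + (N.card - m) * ∑ x ∈ E, g x := by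
    rw [← add_mul]
    congr 1
    omega
  calc N.card * ∑ x ∈ E, g x = m * ∑ x ∈ E, g x + (N.card - m) * ∑ x ∈ E, g x := h4
  _ ≤ m * ∑ x ∈ E, g x + m * ∑ x ∈ N \ E, g x := by omega
  _ = m * (∑ x ∈ E, g x + ∑ x ∈ N \ E, g x) := by rw [mul_add]
  _ = m * ∑ x ∈ N, g x := by rw [add_comm, h3]



lemma key_split (hforest : G.IsAcyclic) (A : Finset V) (v : V) (hvA : v ∉ A) (dj : ℕ)
    (hdj : dj ≤ (nbrsIn G A v).card) :
    ∃ S ⊆ A, S.card ≤ A.card ∧ dj * A.card ≤ (nbrsIn G A v).card * S.card ∧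
      eCnt G S ({v} ∪ (A \ S)) ≤ dj := by
  classical
  set N := nbrsIn G A v with hN
  set di := N.card with hdi
  set comp : V → Finset V := fun x => A.filter (fun y => reachIn G A x y) with hcomp
  have hNsub : N ⊆ A := Finset.filter_subset _ _
  have hNadj : ∀ x ∈ N, G.Adj v x := fun x hx => (Finset.mem_filter.mp hx).2
  obtain ⟨E, hEN, hEcard, hEsum⟩ :=
    exists_small_subset N (fun x => (comp x).card) (di - dj) (by omega)
  set S : Finset V := A.filter (fun y => ∀ x ∈ E, ¬ reachIn G A x y) with hS
  have hSA : S ⊆ A := Finset.filter_subset _ _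
  have hAS : A \ S ⊆ E.biUnion comp := by
    intro y hy
    rw [Finset.mem_sdiff] at hy
    obtain ⟨hyA, hyS⟩ := hy
    rw [hS, Finset.mem_filter] at hyS
    push_neg at hyS
    obtain ⟨x, hxE, hreach⟩ := hyS hyA
    exact Finset.mem_biUnion.mpr ⟨x, hxE, Finset.mem_filter.mpr ⟨hyA, hreach⟩⟩
  have hdisj : ∀ x ∈ N, ∀ x' ∈ N, x ≠ x' → Disjoint (comp x) (comp x') := by
    intro x hx x' hx' hne
    rw [Finset.disjoint_left]
    intro y hy hy'
    have r1 : reachIn G A x y := (Finset.mem_filter.mp hy).2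
    have r2 : reachIn G A x' y := (Finset.mem_filter.mp hy').2
    exact hne (reach_nbr_eq G hforest hvA (hNadj x hx) (hNadj x' hx')
      (reachIn_trans G r1 (reachIn_symm G r2)))
  have hsumN : ∑ x ∈ N, (comp x).card ≤ A.card := by
    rw [← Finset.card_biUnion hdisj]
    exact Finset.card_le_card (Finset.biUnion_subset.mpr (fun x _ => Finset.filter_subset _ _))
  have hsize : A.card ≤ S.card + ∑ x ∈ E, (comp x).card := by
    have h1 : (A \ S).card ≤ ∑ x ∈ E, (comp x).card :=
      le_trans (Finset.card_le_card hAS) Finset.card_biUnion_le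
    have h2 : (A \ S).card = A.card - S.card := Finset.card_sdiff_of_subset hSA
    have h3 := Finset.card_le_card hSA
    omega
  have hmain : dj * A.card ≤ di * S.card := by
    have hEsum' : di * ∑ x ∈ E, (comp x).card ≤ (di - dj) * A.card :=
      le_trans hEsum (Nat.mul_le_mul_left _ hsumN)
    have hx : di * A.card ≤ di * S.card + di * ∑ x ∈ E, (comp x).card := by
      calc di * A.card ≤ di * (S.card + ∑ x ∈ E, (comp x).card) := Nat.mul_le_mul_left _ hsize
      _ = _ := by ring
    have hdd : di * A.card = dj * A.card + (di - dj) * A.card := by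
      rw [← add_mul]; congr 1; omega
    omega
  have hcut : eCnt G S ({v} ∪ (A \ S)) ≤ dj := by
    have hd : Disjoint ({v} : Finset V) (A \ S) := by
      simp only [Finset.disjoint_singleton_left, Finset.mem_sdiff]
      exact fun h => hvA h.1
    rw [eCnt_union_right G S hd]
    have hzero : eCnt G S (A \ S) = 0 := by
      rw [eCnt]
      refine Finset.sum_eq_zero (fun y hy => Finset.sum_eq_zero (fun z hz => ?_))
      rw [if_neg]
      intro hadj
      rw [Finset.mem_sdiff] at hz
      obtain ⟨hzA, hzS⟩ := hz
      rw [hS, Finset.mem_filter] at hzS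
      push_neg at hzS
      obtain ⟨x, hxE, hreach⟩ := hzS hzA
      have hyS := hy
      rw [hS, Finset.mem_filter] at hyS
      exact hyS.2 x hxE (reachIn_step G hreach hadj.symm (hSA hy))
    have hv : eCnt G S {v} ≤ dj := by
      rw [eCnt_comm, ← nbrsIn_card]
      have hsub : nbrsIn G S v ⊆ N \ E := by
        intro x hx
        rw [nbrsIn, Finset.mem_filter] at hx
        rw [Finset.mem_sdiff]
        refine ⟨Finset.mem_filter.mpr ⟨hSA hx.1, hx.2⟩, fun hxE => ?_⟩
        have hxS := hx.1
        rw [hS, Finset.mem_filter] at hxS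
        exact hxS.2 x hxE (reachIn_refl G hxS.1)
      calc (nbrsIn G S v).card ≤ (N \ E).card := Finset.card_le_card hsub
      _ = di - (di - dj) := by rw [Finset.card_sdiff_of_subset hEN, hEcard]
      _ ≤ dj := by omega
    omega
  exact ⟨S, hSA, Finset.card_le_card hSA, hmain, hcut⟩



/-- Validity of a partition (first three conditions). -/
def GoodP {k : ℕ} (P : Fin k → Finset V) : Prop :=
  (∀ i, (P i).Nonempty) ∧ (∀ i j, i ≠ j → Disjoint (P i) (P j)) ∧ (∀ v : V, ∃ i, v ∈ P i)

lemma sum_fin_split {M : Type*} [AddCommMonoid M] {k : ℕ} {i j : Fin k} (hij : i ≠ j)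
    (F : Fin k → M) :
    ∑ l, F l = F i + F j + ∑ l ∈ Finset.univ \ {i, j}, F l := by
  rw [← Finset.sum_sdiff (Finset.subset_univ {i, j}), Finset.sum_pair hij]
  abel

lemma sum_update_two {k : ℕ} {i j : Fin k} (hij : i ≠ j) (P : Fin k → Finset V)
    (X Y : Finset V) (g : Finset V → ℤ) :
    ∑ l, g (Function.update (Function.update P i X) j Y l)
      = ∑ l, g (P l) + (g X + g Y - g (P i) - g (P j)) := by
  have hi : Function.update (Function.update P i X) j Y i = X := by
    rw [Function.update_of_ne hij, Function.update_self]
  have hj : Function.update (Function.update P i X) j Y j = Y := by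
    rw [Function.update_self]
  have hrest : ∀ l ∈ Finset.univ \ ({i, j} : Finset (Fin k)),
      Function.update (Function.update P i X) j Y l = P l := by
    intro l hl
    simp only [Finset.mem_sdiff, Finset.mem_insert, Finset.mem_singleton, Finset.mem_univ,
      true_and] at hl
    push_neg at hl
    rw [Function.update_of_ne hl.2, Function.update_of_ne hl.1]
  rw [sum_fin_split hij (fun l => g (Function.update (Function.update P i X) j Y l)),
    sum_fin_split hij (fun l => g (P l))]
  simp only [hi, hj]
  rw [Finset.sum_congr rfl (fun l hl => congrArg g (hrest l hl))]
  ring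

lemma good_update {k : ℕ} {P : Fin k → Finset V} (hP : GoodP P) {i j : Fin k} (hij : i ≠ j)
    {X Y : Finset V} (hXY : Disjoint X Y) (hX : X.Nonempty) (hY : Y.Nonempty)
    (hU : X ∪ Y = P i ∪ P j) :
    GoodP (Function.update (Function.update P i X) j Y) := by
  obtain ⟨hne, hdis, hcov⟩ := hP
  have hXsub : X ⊆ P i ∪ P j := by rw [← hU]; exact Finset.subset_union_left
  have hYsub : Y ⊆ P i ∪ P j := by rw [← hU]; exact Finset.subset_union_right
  have hval : ∀ l, l ≠ i → l ≠ j →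
      Function.update (Function.update P i X) j Y l = P l := by
    intro l h1 h2
    rw [Function.update_of_ne h2, Function.update_of_ne h1]
  have hi : Function.update (Function.update P i X) j Y i = X := by
    rw [Function.update_of_ne hij, Function.update_self]
  have hj : Function.update (Function.update P i X) j Y j = Y := by
    rw [Function.update_self]
  have hdisP : ∀ l, l ≠ i → l ≠ j → Disjoint (P i ∪ P j) (P l) := by
    intro l h1 h2
    exact Finset.disjoint_union_left.mpr ⟨hdis i l (Ne.symm h1), hdis j l (Ne.symm h2)⟩
  refine ⟨?_, ?_, ?_⟩
  · intro l
    by_cases h2 : l = j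
    · subst h2; rw [hj]; exact hY
    by_cases h1 : l = i
    · subst h1; rw [hi]; exact hX
    · rw [hval l h1 h2]; exact hne l
  · intro a b hab
    by_cases ha2 : a = j
    · subst ha2
      rw [hj]
      by_cases hb1 : b = i
      · subst hb1; rw [hi]; exact hXY.symm
      · rw [hval b hb1 (Ne.symm hab)]
        exact ((hdisP b hb1 (Ne.symm hab)).mono_left hYsub)
    by_cases ha1 : a = i
    · subst ha1
      rw [hi]
      by_cases hb2 : b = j
      · subst hb2; rw [hj]; exact hXY
      · rw [hval b (Ne.symm hab) hb2]
        exact ((hdisP b (Ne.symm hab) hb2).mono_left hXsub)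
    · rw [hval a ha1 ha2]
      by_cases hb2 : b = j
      · subst hb2; rw [hj]
        exact ((hdisP a ha1 ha2).mono_left hYsub).symm
      by_cases hb1 : b = i
      · subst hb1; rw [hi]
        exact ((hdisP a ha1 ha2).mono_left hXsub).symm
      · rw [hval b hb1 hb2]; exact hdis a b hab
  · intro w
    obtain ⟨l, hl⟩ := hcov w
    by_cases h1 : l = i
    · rw [h1] at hl
      have hw : w ∈ X ∪ Y := by rw [hU]; exact Finset.mem_union_left _ hl
      rcases Finset.mem_union.mp hw with h | h
      · exact ⟨i, by rw [hi]; exact h⟩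
      · exact ⟨j, by rw [hj]; exact h⟩
    by_cases h2 : l = j
    · rw [h2] at hl
      have hw : w ∈ X ∪ Y := by rw [hU]; exact Finset.mem_union_right _ hl
      rcases Finset.mem_union.mp hw with h | h
      · exact ⟨i, by rw [hi]; exact h⟩
      · exact ⟨j, by rw [hj]; exact h⟩
    · exact ⟨l, by rw [hval l h1 h2]; exact hl⟩

lemma goodP_exists {k : ℕ} (hk : 0 < k) (hcard : k ≤ Fintype.card V) :
    ∃ P : Fin k → Finset V, GoodP (V := V) P := by
  classical
  have h1 : Fintype.card (Fin k) ≤ Fintype.card V := by simpa using hcard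
  obtain ⟨g⟩ := Function.Embedding.nonempty_of_card_le h1
  set f : V → Fin k := fun v => if h : ∃ i, g i = v then h.choose else ⟨0, hk⟩ with hf
  have hfg : ∀ i, f (g i) = i := by
    intro i
    have hex : ∃ i', g i' = g i := ⟨i, rfl⟩
    simp only [hf, dif_pos hex]
    exact g.injective hex.choose_spec
  refine ⟨fun i => Finset.univ.filter (fun v => f v = i), fun i =>
    ⟨g i, Finset.mem_filter.mpr ⟨Finset.mem_univ _, hfg i⟩⟩, ?_, fun v =>
    ⟨f v, Finset.mem_filter.mpr ⟨Finset.mem_univ _, rfl⟩⟩⟩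
  intro i j hij
  rw [Finset.disjoint_left]
  intro w hwi hwj
  rw [Finset.mem_filter] at hwi hwj
  exact hij (by rw [← hwi.2, hwj.2])


end Helpers

/-- A generalized `k`-community structure of `G`. -/
def IsGenKComm {V : Type*} [Fintype V] [DecidableEq V] (G : SimpleGraph V) [DecidableRel G.Adj]
    {k : ℕ} (C : Fin k → Finset V) : Prop :=
  (∀ i, (C i).Nonempty) ∧
  (∀ i j, i ≠ j → Disjoint (C i) (C j)) ∧
  (∀ v : V, ∃ i, v ∈ C i) ∧
  (∀ i j, i ≠ j → ∀ v ∈ C i,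
    (nbrsIn G (C j) v).card * ((C i).card - 1) ≤ (nbrsIn G (C i) v).card * (C j).card)

set_option maxHeartbeats 1000000 in
/-- Every forest with at least `k` vertices admits a generalized `k`-community
structure. -/
theorem stmt_15 {V : Type*} [Fintype V] [DecidableEq V] (G : SimpleGraph V)
    [DecidableRel G.Adj] (hforest : G.IsAcyclic) {k : ℕ} (hk : 2 ≤ k)
    (hcard : k ≤ Fintype.card V) :
    ∃ C : Fin k → Finset V, IsGenKComm G C := by
  classical
  obtain ⟨P₀, hP₀⟩ := goodP_exists (V := V) (k := k) (by omega) hcard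
  set n := Fintype.card V with hn
  set Phi : (Fin k → Finset V) → ℤ := fun P =>
    (n : ℤ) * ∑ l, (eCnt G (P l) (P l) : ℤ) - ∑ l, ((P l).card : ℤ) ^ 2 with hPhi
  obtain ⟨P, hPmem, hPmax⟩ := Finset.exists_max_image
    (Finset.univ.filter (fun P : Fin k → Finset V => GoodP P)) Phi
    ⟨P₀, Finset.mem_filter.mpr ⟨Finset.mem_univ _, hP₀⟩⟩
  have hPG : GoodP P := (Finset.mem_filter.mp hPmem).2
  have hmax : ∀ P', GoodP P' → Phi P' ≤ Phi P := fun P' h =>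
    hPmax P' (Finset.mem_filter.mpr ⟨Finset.mem_univ _, h⟩)
  obtain ⟨hne, hdis, hcov⟩ := hPG
  refine ⟨P, hne, hdis, hcov, ?_⟩
  intro i j hij v hv
  by_contra hcon
  push_neg at hcon
  set di := (nbrsIn G (P i) v).card with hdi
  set dj := (nbrsIn G (P j) v).card with hdj
  set si := (P i).card with hsi
  set sj := (P j).card with hsj
  have hsi1 : 1 ≤ si := Finset.card_pos.mpr ⟨v, hv⟩
  have hsj1 : 1 ≤ sj := Finset.card_pos.mpr (hne j)
  have h0 : 0 < dj * (si - 1) := lt_of_le_of_lt (Nat.zero_le _) hcon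
  have hdj1 : 1 ≤ dj := by
    rcases Nat.eq_zero_or_pos dj with h | h
    · rw [h, zero_mul] at h0; omega
    · exact h
  have hsi2 : 2 ≤ si := by
    rcases Nat.lt_or_ge si 2 with h | h
    · have h1 : si - 1 = 0 := by omega
      rw [h1, mul_zero] at h0; omega
    · exact h
  have hvj : v ∉ P j := fun h => (Finset.disjoint_left.mp (hdis i j hij)) hv h
  have hsum : si + sj ≤ n := by
    calc si + sj = ((P i) ∪ (P j)).card := (Finset.card_union_of_disjoint (hdis i j hij)).symm
    _ ≤ (Finset.univ : Finset V).card := Finset.card_le_univ _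
    _ = n := Finset.card_univ
  rcases lt_trichotomy dj di with hlt | heq | hgt
  · -- Case c : dj < di, use the split move
    have hvA : v ∉ (P i).erase v := Finset.notMem_erase _ _
    have hcard' : dj ≤ (nbrsIn G ((P i).erase v) v).card := by
      rw [nbrsIn_erase, ← hdi]; omega
    obtain ⟨S, hSA, hScard, hSsize, hScut⟩ :=
      key_split G hforest ((P i).erase v) v hvA dj hcard'
    rw [nbrsIn_erase, ← hdi, Finset.card_erase_of_mem hv, ← hsi] at hSsize
    rw [Finset.card_erase_of_mem hv, ← hsi] at hScard
    have hSPi : S ⊆ P i := hSA.trans (Finset.erase_subset _ _)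
    have hvS : v ∉ S := fun h => hvA (hSA h)
    set B := P i \ S with hB
    have hvB : v ∈ B := Finset.mem_sdiff.mpr ⟨hv, hvS⟩
    have hαsj : sj < S.card := by
      have h1 : di * sj < di * S.card := lt_of_lt_of_le hcon hSsize
      exact Nat.lt_of_mul_lt_mul_left h1
    have hSne : S.Nonempty := Finset.card_pos.mp (by omega)
    have hBJ : Disjoint B (P j) := (hdis i j hij).mono_left Finset.sdiff_subset
    have hSB : Disjoint S B := Finset.disjoint_sdiff
    set X := B ∪ P j with hX
    have hXYd : Disjoint X S := Finset.disjoint_union_left.mpr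
      ⟨Finset.sdiff_disjoint, Disjoint.mono_right hSPi (hdis j i (Ne.symm hij))⟩
    have hXne : X.Nonempty := ⟨v, Finset.mem_union_left _ hvB⟩
    have hU : X ∪ S = P i ∪ P j := by
      rw [hX, Finset.union_right_comm, hB, Finset.sdiff_union_of_subset hSPi]
    have hGood' := good_update ⟨hne, hdis, hcov⟩ hij hXYd hXne hSne hU
    have hcontr := hmax _ hGood'
    have hsumE : (∑ l, (eCnt G ((Function.update (Function.update P i X) j S) l)
          ((Function.update (Function.update P i X) j S) l) : ℤ))
        = ∑ l, (eCnt G (P l) (P l) : ℤ) + ((eCnt G X X : ℤ) + (eCnt G S S : ℤ)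
          - (eCnt G (P i) (P i) : ℤ) - (eCnt G (P j) (P j) : ℤ)) :=
      sum_update_two hij P X S (fun C => (eCnt G C C : ℤ))
    have hsumQ : (∑ l, (((Function.update (Function.update P i X) j S) l).card : ℤ) ^ 2)
        = ∑ l, ((P l).card : ℤ) ^ 2 + (((X.card : ℤ)) ^ 2 + ((S.card : ℤ)) ^ 2
          - (((P i).card : ℤ)) ^ 2 - (((P j).card : ℤ)) ^ 2) :=
      sum_update_two hij P X S (fun C => ((C.card : ℤ)) ^ 2)
    simp only [hPhi] at hcontr
    rw [hsumE, hsumQ] at hcontr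
    -- edge identities
    have hun : S ∪ B = P i := by rw [hB, Finset.union_sdiff_of_subset hSPi]
    have hEi : eCnt G (P i) (P i) = eCnt G S S + 2 * eCnt G S B + eCnt G B B := by
      conv_lhs => rw [← hun]
      rw [eCnt_union_left G hSB, eCnt_union_right G _ hSB, eCnt_union_right G _ hSB,
        eCnt_comm G B S]
      ring
    have hEX : eCnt G X X = eCnt G B B + 2 * eCnt G B (P j) + eCnt G (P j) (P j) := by
      rw [hX, eCnt_union_left G hBJ, eCnt_union_right G _ hBJ, eCnt_union_right G _ hBJ,
        eCnt_comm G (P j) B]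
      ring
    have hcut : eCnt G S B ≤ dj := by
      have hBeq : B = {v} ∪ ((P i).erase v \ S) := by
        ext w
        simp only [hB, Finset.mem_sdiff, Finset.mem_union, Finset.mem_singleton,
          Finset.mem_erase]
        by_cases hw : w = v
        · subst hw; simp [hv, hvS]
        · simp only [hw, false_or]
          tauto
      rw [hBeq]; exact hScut
    have hcross : dj ≤ eCnt G B (P j) := by
      calc dj = eCnt G {v} (P j) := by rw [hdj, nbrsIn_card]
      _ ≤ eCnt G B (P j) := eCnt_mono_left G (Finset.singleton_subset_iff.mpr hvB) _
    have hcardX : X.card = (si - S.card) + sj := by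
      rw [hX, Finset.card_union_of_disjoint hBJ, hB, Finset.card_sdiff_of_subset hSPi, ← hsi, ← hsj]
    -- cast identities and plug into hcontr
    have hEiZ : (eCnt G (P i) (P i) : ℤ)
        = (eCnt G S S : ℤ) + 2 * (eCnt G S B : ℤ) + (eCnt G B B : ℤ) := by exact_mod_cast hEi
    have hEXZ : (eCnt G X X : ℤ)
        = (eCnt G B B : ℤ) + 2 * (eCnt G B (P j) : ℤ) + (eCnt G (P j) (P j) : ℤ) := by
      exact_mod_cast hEX
    have hle2 : S.card ≤ si := by omega
    have hcardXZ : (X.card : ℤ) = ((si : ℤ) - S.card) + sj := by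
      rw [hcardX]; push_cast [hle2]; ring
    rw [hEiZ, hEXZ, hcardXZ, ← hsi, ← hsj] at hcontr
    -- final contradiction
    have hn0 : (0:ℤ) ≤ (n:ℤ) := Int.natCast_nonneg n
    have hcc : (eCnt G S B : ℤ) ≤ (eCnt G B (P j) : ℤ) := by exact_mod_cast le_trans hcut hcross
    have hmul : (n:ℤ) * (eCnt G S B : ℤ) ≤ (n:ℤ) * (eCnt G B (P j) : ℤ) :=
      mul_le_mul_of_nonneg_left hcc hn0
    have h1 : (0:ℤ) < (si:ℤ) - (S.card:ℤ) := by omega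
    have h2 : (0:ℤ) < (S.card:ℤ) - (sj:ℤ) := by omega
    have hMP := mul_pos h1 h2
    set a1 := (eCnt G S S : ℤ) with ha1
    set a2 := (eCnt G B B : ℤ) with ha2
    set a3 := (eCnt G (P j) (P j) : ℤ) with ha3
    set cr := (eCnt G B (P j) : ℤ) with hcr
    set ct := (eCnt G S B : ℤ) with hct
    set SE := ∑ l, (eCnt G (P l) (P l) : ℤ) with hSE
    set SQ := ∑ l, ((P l).card : ℤ) ^ 2 with hSQ
    set sz := (S.card : ℤ) with hsz
    set nz := (n : ℤ) with hnz
    set siz := (si : ℤ) with hsiz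
    set sjz := (sj : ℤ) with hsjz
    clear_value a1 a2 a3 cr ct SE SQ sz nz siz sjz
    nlinarith only [hcontr, hmul, hMP, h1, h2]
  · -- Case b : dj = di
    set X := (P i).erase v with hX
    set Y := insert v (P j) with hY
    have hXYd : Disjoint X Y := by
      rw [hY, Finset.disjoint_insert_right]
      exact ⟨Finset.notMem_erase _ _, ((hdis i j hij).mono_left (Finset.erase_subset _ _))⟩
    have hXne : X.Nonempty := by
      rw [← Finset.card_pos, hX, Finset.card_erase_of_mem hv, ← hsi]; omega
    have hYne : Y.Nonempty := Finset.insert_nonempty _ _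
    have hU : X ∪ Y = P i ∪ P j := by
      ext w
      simp only [hX, hY, Finset.mem_union, Finset.mem_erase, Finset.mem_insert]
      by_cases hw : w = v
      · subst hw; simp [hv]
      · simp [hw]
    have hGood' := good_update ⟨hne, hdis, hcov⟩ hij hXYd hXne hYne hU
    have hcontr := hmax _ hGood'
    have hsumE : (∑ l, (eCnt G ((Function.update (Function.update P i X) j Y) l)
          ((Function.update (Function.update P i X) j Y) l) : ℤ))
        = ∑ l, (eCnt G (P l) (P l) : ℤ) + ((eCnt G X X : ℤ) + (eCnt G Y Y : ℤ)
          - (eCnt G (P i) (P i) : ℤ) - (eCnt G (P j) (P j) : ℤ)) :=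
      sum_update_two hij P X Y (fun C => (eCnt G C C : ℤ))
    have hsumQ : (∑ l, (((Function.update (Function.update P i X) j Y) l).card : ℤ) ^ 2)
        = ∑ l, ((P l).card : ℤ) ^ 2 + (((X.card : ℤ)) ^ 2 + ((Y.card : ℤ)) ^ 2
          - (((P i).card : ℤ)) ^ 2 - (((P j).card : ℤ)) ^ 2) :=
      sum_update_two hij P X Y (fun C => ((C.card : ℤ)) ^ 2)
    simp only [hPhi] at hcontr
    rw [hsumE, hsumQ] at hcontr
    have hEXe : eCnt G (P i) (P i) = eCnt G X X + 2 * di := by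
      rw [hX, hdi]; exact eCnt_erase G (P i) v hv
    have hEYe : eCnt G Y Y = eCnt G (P j) (P j) + 2 * dj := by
      rw [hY, hdj]; exact eCnt_insert G (P j) v hvj
    have hEXz : (eCnt G X X : ℤ) = (eCnt G (P i) (P i) : ℤ) - 2 * di := by
      have h := hEXe; zify at h; linarith
    have hEYz : (eCnt G Y Y : ℤ) = (eCnt G (P j) (P j) : ℤ) + 2 * dj := by exact_mod_cast hEYe
    have hcX : X.card = si - 1 := by rw [hX, Finset.card_erase_of_mem hv, hsi]
    have hcY : Y.card = sj + 1 := by rw [hY, Finset.card_insert_of_notMem hvj, hsj]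
    have hcXz : (X.card : ℤ) = (si:ℤ) - 1 := by zify [hsi1] at hcX; exact hcX
    have hcYz : (Y.card : ℤ) = (sj:ℤ) + 1 := by exact_mod_cast hcY
    rw [hEXz, hEYz, hcXz, hcYz, ← hsi, ← hsj] at hcontr
    have hslt : sj < si - 1 := by
      rw [heq] at hcon
      exact Nat.lt_of_mul_lt_mul_left hcon
    have hsltz : (sj:ℤ) + 2 ≤ (si:ℤ) := by
      have : sj + 2 ≤ si := by omega
      exact_mod_cast this
    have heqz : (dj:ℤ) = (di:ℤ) := by exact_mod_cast heq
    rw [heqz] at hcontr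
    set a3 := (eCnt G (P i) (P i) : ℤ) with ha3
    set a4 := (eCnt G (P j) (P j) : ℤ) with ha4
    set SE := ∑ l, (eCnt G (P l) (P l) : ℤ) with hSE
    set SQ := ∑ l, ((P l).card : ℤ) ^ 2 with hSQ
    set nz := (n : ℤ) with hnz
    set siz := (si : ℤ) with hsiz
    set sjz := (sj : ℤ) with hsjz
    set diz := (di : ℤ) with hdiz
    clear_value a3 a4 SE SQ nz siz sjz diz
    nlinarith only [hcontr, hsltz]
  · -- Case a : dj > di
    set X := (P i).erase v with hX
    set Y := insert v (P j) with hY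
    have hXYd : Disjoint X Y := by
      rw [hY, Finset.disjoint_insert_right]
      exact ⟨Finset.notMem_erase _ _, ((hdis i j hij).mono_left (Finset.erase_subset _ _))⟩
    have hXne : X.Nonempty := by
      rw [← Finset.card_pos, hX, Finset.card_erase_of_mem hv, ← hsi]; omega
    have hYne : Y.Nonempty := Finset.insert_nonempty _ _
    have hU : X ∪ Y = P i ∪ P j := by
      ext w
      simp only [hX, hY, Finset.mem_union, Finset.mem_erase, Finset.mem_insert]
      by_cases hw : w = v
      · subst hw; simp [hv]
      · simp [hw]
    have hGood' := good_update ⟨hne, hdis, hcov⟩ hij hXYd hXne hYne hU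
    have hcontr := hmax _ hGood'
    have hsumE : (∑ l, (eCnt G ((Function.update (Function.update P i X) j Y) l)
          ((Function.update (Function.update P i X) j Y) l) : ℤ))
        = ∑ l, (eCnt G (P l) (P l) : ℤ) + ((eCnt G X X : ℤ) + (eCnt G Y Y : ℤ)
          - (eCnt G (P i) (P i) : ℤ) - (eCnt G (P j) (P j) : ℤ)) :=
      sum_update_two hij P X Y (fun C => (eCnt G C C : ℤ))
    have hsumQ : (∑ l, (((Function.update (Function.update P i X) j Y) l).card : ℤ) ^ 2)
        = ∑ l, ((P l).card : ℤ) ^ 2 + (((X.card : ℤ)) ^ 2 + ((Y.card : ℤ)) ^ 2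
          - (((P i).card : ℤ)) ^ 2 - (((P j).card : ℤ)) ^ 2) :=
      sum_update_two hij P X Y (fun C => ((C.card : ℤ)) ^ 2)
    simp only [hPhi] at hcontr
    rw [hsumE, hsumQ] at hcontr
    have hEXe : eCnt G (P i) (P i) = eCnt G X X + 2 * di := by
      rw [hX, hdi]; exact eCnt_erase G (P i) v hv
    have hEYe : eCnt G Y Y = eCnt G (P j) (P j) + 2 * dj := by
      rw [hY, hdj]; exact eCnt_insert G (P j) v hvj
    have hEXz : (eCnt G X X : ℤ) = (eCnt G (P i) (P i) : ℤ) - 2 * di := by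
      have h := hEXe; zify at h; linarith
    have hEYz : (eCnt G Y Y : ℤ) = (eCnt G (P j) (P j) : ℤ) + 2 * dj := by exact_mod_cast hEYe
    have hcX : X.card = si - 1 := by rw [hX, Finset.card_erase_of_mem hv, hsi]
    have hcY : Y.card = sj + 1 := by rw [hY, Finset.card_insert_of_notMem hvj, hsj]
    have hcXz : (X.card : ℤ) = (si:ℤ) - 1 := by zify [hsi1] at hcX; exact hcX
    have hcYz : (Y.card : ℤ) = (sj:ℤ) + 1 := by exact_mod_cast hcY
    rw [hEXz, hEYz, hcXz, hcYz, ← hsi, ← hsj] at hcontr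
    have hn0 : (0:ℤ) ≤ (n:ℤ) := Int.natCast_nonneg n
    have hd2 : (2:ℤ) ≤ 2 * (dj:ℤ) - 2 * (di:ℤ) := by
      have : di + 1 ≤ dj := hgt
      have hz : (di:ℤ) + 1 ≤ (dj:ℤ) := by exact_mod_cast this
      linarith
    have hmul : (n:ℤ) * 2 ≤ (n:ℤ) * (2 * (dj:ℤ) - 2 * (di:ℤ)) :=
      mul_le_mul_of_nonneg_left hd2 hn0
    have hsumz : (si:ℤ) + (sj:ℤ) ≤ (n:ℤ) := by exact_mod_cast hsum
    have hsj1z : (1:ℤ) ≤ (sj:ℤ) := by exact_mod_cast hsj1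
    have hsiz2 : (2:ℤ) ≤ (si:ℤ) := by exact_mod_cast hsi2
    set a3 := (eCnt G (P i) (P i) : ℤ) with ha3
    set a4 := (eCnt G (P j) (P j) : ℤ) with ha4
    set SE := ∑ l, (eCnt G (P l) (P l) : ℤ) with hSE
    set SQ := ∑ l, ((P l).card : ℤ) ^ 2 with hSQ
    set nz := (n : ℤ) with hnz
    set siz := (si : ℤ) with hsizz
    set sjz := (sj : ℤ) with hsjz
    set diz := (di : ℤ) with hdiz
    set djz := (dj : ℤ) with hdjz
    clear_value a3 a4 SE SQ nz siz sjz diz djz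
    nlinarith only [hcontr, hmul, hsumz, hsiz2, hsj1z]
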